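/- In a right-angled Coxeter group Γ with word metric d, for any three elements α, β, γ ∈ Γ there exists δ ∈ Γ lying between each pair: d(α, δ) + d(δ, β) = d(α, β), d(α, δ) + d(δ, γ) = d(α, γ), and d(β, δ) + d(δ, γ) = d(β, γ). -/

import Mathlib

set_option linter.unusedSectionVars false
set_option maxHeartbeats 800000

open CoxeterSystem List

section racg

variable {B : Type*} {W : Type*} [Group W] {M : CoxeterMatrix B} (cs : CoxeterSystem M W)

local prefix:100 "s" => cs.simple
local prefix:100 "π" => cs.wordProd
local prefix:100 "ℓ" => cs.length

noncomputable def indic (u x : W) : ZMod 2 :=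
  @ite _ (x = u) (Classical.propDecidable _) 1 0

lemma indic_self (u : W) : indic u u = 1 := by simp [indic]

lemma indic_of_ne {u x : W} (h : x ≠ u) : indic u x = 0 := by simp [indic, h]

lemma mul_conj_mul {v : W} (hv : v * v = 1) (y : W) : v * (v * y * v) * v = y := by
  calc v * (v * y * v) * v = (v * v) * y * (v * v) := by group
    _ = y := by rw [hv, one_mul, mul_one]

lemma indic_conj {v : W} (hv : v * v = 1) (u x : W) :
    indic u (v * x * v) = indic (v * u * v) x := by
  have h : (v * x * v = u) ↔ (x = v * u * v) :=
    ⟨fun h => by rw [← h, mul_conj_mul hv], fun h => by rw [h, mul_conj_mul hv]⟩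
  unfold indic
  split <;> split <;> first | rfl | (exfalso; tauto)

lemma zmod2_add_self : ∀ a : ZMod 2, a + a = 0 := by decide

lemma zmod2_ne_zero : ∀ a : ZMod 2, a ≠ 0 → a = 1 := by decide

noncomputable local instance : DecidableEq W := Classical.decEq W

noncomputable def racgPerm (k : B) : Equiv.Perm (W × ZMod 2) where
  toFun p := (s k * p.1 * s k, p.2 + indic (s k) p.1)
  invFun p := (s k * p.1 * s k, p.2 + indic (s k) p.1)
  left_inv := by
    intro p
    have hk := cs.simple_mul_simple_self k
    ext
    · exact mul_conj_mul hk p.1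
    · show p.2 + indic (s k) p.1 + indic (s k) (s k * p.1 * s k) = p.2
      rw [indic_conj hk, show s k * s k * s k = s k by rw [hk]; group,
        add_assoc, zmod2_add_self, add_zero]
  right_inv := by
    intro p
    have hk := cs.simple_mul_simple_self k
    ext
    · exact mul_conj_mul hk p.1
    · show p.2 + indic (s k) p.1 + indic (s k) (s k * p.1 * s k) = p.2
      rw [indic_conj hk, show s k * s k * s k = s k by rw [hk]; group,
        add_assoc, zmod2_add_self, add_zero]

lemma racgPerm_apply (k : B) (p : W × ZMod 2) :
    racgPerm cs k p = (s k * p.1 * s k, p.2 + indic (s k) p.1) := rfl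

lemma racgPerm_sq (k : B) : racgPerm cs k * racgPerm cs k = 1 := by
  ext p
  · show ((racgPerm cs k) ((racgPerm cs k) p)).1 = p.1
    simp only [racgPerm_apply]
    exact mul_conj_mul (cs.simple_mul_simple_self k) p.1
  · show ((racgPerm cs k) ((racgPerm cs k) p)).2 = p.2
    simp only [racgPerm_apply]
    have hk := cs.simple_mul_simple_self k
    show p.2 + indic (s k) p.1 + indic (s k) (s k * p.1 * s k) = p.2
    rw [indic_conj hk, show s k * s k * s k = s k by rw [hk]; group,
      add_assoc, zmod2_add_self, add_zero]

/-- RACG hypothesis -/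
def RA (M : CoxeterMatrix B) : Prop := ∀ a b : B, a ≠ b → M a b = 0 ∨ M a b = 2

lemma simple_comm_of_two {i j : B} (h2 : M i j = 2) : s i * s j = s j * s i := by
  have h := cs.simple_mul_simple_pow i j
  rw [h2, pow_two] at h
  have : s i * s j = (s i * s j)⁻¹ := by
    rw [eq_inv_iff_mul_eq_one]; exact h
  rw [this, mul_inv_rev, cs.inv_simple, cs.inv_simple]

lemma racgPerm_liftable (hra : RA M) : M.IsLiftable (racgPerm cs) := by
  intro i j
  by_cases hij : i = j
  · subst hij; rw [M.diagonal, pow_one, racgPerm_sq]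
  · rcases hra i j hij with h0 | h2
    · rw [h0, pow_zero]
    · rw [h2]
      have hcomm := simple_comm_of_two cs h2
      have hi := cs.simple_mul_simple_self i
      have hj := cs.simple_mul_simple_self j
      have e1 : s j * s i * s j = s i := by rw [← hcomm, mul_assoc, hj, mul_one]
      have e2 : s i * s j * s i = s j := by rw [hcomm, mul_assoc, hi, mul_one]
      have hperm : racgPerm cs i * racgPerm cs j = racgPerm cs j * racgPerm cs i := by
        ext p
        · show ((racgPerm cs i) ((racgPerm cs j) p)).1 = ((racgPerm cs j) ((racgPerm cs i) p)).1
          simp only [racgPerm_apply]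
          show s i * (s j * p.1 * s j) * s i = s j * (s i * p.1 * s i) * s j
          calc s i * (s j * p.1 * s j) * s i = (s i * s j) * p.1 * (s j * s i) := by group
            _ = (s j * s i) * p.1 * (s i * s j) := by rw [hcomm]
            _ = s j * (s i * p.1 * s i) * s j := by group
        · show ((racgPerm cs i) ((racgPerm cs j) p)).2 = ((racgPerm cs j) ((racgPerm cs i) p)).2
          simp only [racgPerm_apply]
          show p.2 + indic (s j) p.1 + indic (s i) (s j * p.1 * s j)
              = p.2 + indic (s i) p.1 + indic (s j) (s i * p.1 * s i)
          rw [indic_conj hj, indic_conj hi, e1, e2]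
          ring
      calc (racgPerm cs i * racgPerm cs j) ^ 2
          = racgPerm cs i * (racgPerm cs j * racgPerm cs i) * racgPerm cs j := by
            rw [pow_two]; group
        _ = racgPerm cs i * (racgPerm cs i * racgPerm cs j) * racgPerm cs j := by rw [hperm]
        _ = (racgPerm cs i * racgPerm cs i) * (racgPerm cs j * racgPerm cs j) := by group
        _ = 1 := by rw [racgPerm_sq, racgPerm_sq, one_mul]

noncomputable def racgPhi (hra : RA M) : W →* Equiv.Perm (W × ZMod 2) :=
  cs.lift ⟨racgPerm cs, racgPerm_liftable cs hra⟩

variable (hra : RA M)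
include hra

lemma racgPhi_simple (k : B) : racgPhi cs hra (s k) = racgPerm cs k :=
  cs.lift_apply_simple (racgPerm_liftable cs hra) k

lemma racgPhi_apply (w : W) :
    ∀ (t : W) (ε : ZMod 2),
    racgPhi cs hra w (t, ε) = (w * t * w⁻¹, ε + (racgPhi cs hra w (t, 0)).2) := by
  induction w using cs.simple_induction with
  | simple i =>
    intro t ε
    rw [racgPhi_simple cs hra, racgPerm_apply, racgPerm_apply, cs.inv_simple]
    simp
  | one => intro t ε; simp
  | mul u v hu hv =>
    intro t ε
    have key : ∀ ε' : ZMod 2, racgPhi cs hra (u * v) (t, ε')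
        = (u * v * t * (u * v)⁻¹, ε' + (racgPhi cs hra v (t, 0)).2
            + (racgPhi cs hra u (v * t * v⁻¹, 0)).2) := by
      intro ε'
      rw [map_mul]
      show racgPhi cs hra u (racgPhi cs hra v (t, ε')) = _
      rw [hv t ε', hu (v * t * v⁻¹) _]
      refine Prod.ext ?_ ?_
      · show u * (v * t * v⁻¹) * u⁻¹ = u * v * t * (u * v)⁻¹
        rw [mul_inv_rev]; group
      · rfl
    rw [key ε, key 0]
    refine Prod.ext rfl ?_
    show ε + _ + _ = ε + ((0:ZMod 2) + _ + _)
    rw [zero_add, add_assoc]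

/-- the eta cocycle. -/
noncomputable def etaC (w t : W) : ZMod 2 := ((racgPhi cs hra) w⁻¹ (t, 0)).2

lemma etaC_one (t : W) : etaC cs hra 1 t = 0 := by
  unfold etaC; simp

lemma etaC_mul (u v t : W) :
    etaC cs hra (u * v) t = etaC cs hra u t + etaC cs hra v (u⁻¹ * t * u) := by
  unfold etaC
  rw [mul_inv_rev, map_mul]
  show (racgPhi cs hra v⁻¹ (racgPhi cs hra u⁻¹ (t, 0))).2 = _
  rw [racgPhi_apply cs hra u⁻¹ t 0, zero_add]
  rw [racgPhi_apply cs hra v⁻¹ _ _]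
  show _ + _ = _
  rw [inv_inv]

lemma etaC_simple (k : B) (t : W) : etaC cs hra (s k) t = indic (s k) t := by
  unfold etaC
  rw [cs.inv_simple, racgPhi_simple cs hra, racgPerm_apply]
  show 0 + indic (s k) t = _
  rw [zero_add]

lemma etaC_simple_mul (k : B) (w t : W) :
    etaC cs hra (s k * w) t = indic (s k) t + etaC cs hra w (s k * t * s k) := by
  rw [etaC_mul cs hra (s k) w t, etaC_simple, cs.inv_simple]

lemma etaC_wordProd (ω : List B) (t : W) :
    etaC cs hra (π ω) t = ((cs.leftInvSeq ω).count t : ZMod 2) := by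
  induction ω generalizing t with
  | nil => simp [etaC_one]
  | cons k ω ih =>
    rw [cs.wordProd_cons, etaC_simple_mul, ih]
    have hlis : cs.leftInvSeq (k :: ω) = s k :: List.map (MulAut.conj (s k)) (cs.leftInvSeq ω) :=
      rfl
    rw [hlis, List.count_cons]
    simp only [beq_iff_eq]
    have hk := cs.simple_mul_simple_self k
    have ht : t = (MulAut.conj (s k)) (s k * t * s k) := by
      show t = s k * (s k * t * s k) * (s k)⁻¹
      rw [cs.inv_simple, mul_conj_mul hk]
    have hcount : (List.map (⇑(MulAut.conj (s k))) (cs.leftInvSeq ω)).count t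
        = (cs.leftInvSeq ω).count (s k * t * s k) := by
      conv_lhs => rw [ht]
      exact List.count_map_of_injective _ _ (MulAut.conj (s k)).injective _
    rw [hcount]
    push_cast
    rw [add_comm]
    congr 1
    by_cases h : s k = t
    · rw [if_pos h, ← h, indic_self]
    · rw [if_neg h, indic_of_ne (fun hh => h hh.symm)]

lemma etaC_refl_self {t : W} (ht : cs.IsReflection t) : etaC cs hra t t = 1 := by
  obtain ⟨w, i, rfl⟩ := ht
  have e : w * s i * w⁻¹ = w * (s i * w⁻¹) := by group
  rw [e]
  have h1 : w⁻¹ * (w * (s i * w⁻¹)) * w = s i := by group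
  have h2 : etaC cs hra (w * w⁻¹) (w * (s i * w⁻¹)) = 0 := by
    rw [mul_inv_cancel, etaC_one]
  rw [etaC_mul cs hra w w⁻¹, h1] at h2
  rw [etaC_mul cs hra w (s i * w⁻¹), h1, etaC_simple_mul, indic_self]
  have h6 : s i * s i * s i = s i := by rw [cs.simple_mul_simple_self]; group
  rw [h6]
  linear_combination h2

lemma eta_eq_one_of_lt {t w : W} (ht : cs.IsReflection t) (h : ℓ (t * w) < ℓ w) :
    etaC cs hra w t = 1 := by
  have h0 : etaC cs hra (t * w) t = 0 := by
    by_contra hne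
    have h1 : etaC cs hra (t * w) t = 1 := zmod2_ne_zero _ hne
    obtain ⟨ω, hred, hw⟩ := cs.exists_reduced_word' (t * w)
    rw [hw, etaC_wordProd] at h1
    have h2 : (cs.leftInvSeq ω).count t ≠ 0 := by
      intro hc
      rw [hc] at h1; simp at h1
    have hmem : t ∈ cs.leftInvSeq ω := by
      rw [← List.count_pos_iff]; omega
    have h3 := (cs.isLeftInversion_of_mem_leftInvSeq hred hmem).2
    rw [← hw] at h3
    rw [← mul_assoc, ht.mul_self, one_mul] at h3
    omega
  have h4 : w = t * (t * w) := by rw [← mul_assoc, ht.mul_self, one_mul]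
  rw [h4, etaC_mul]
  have h5 : t⁻¹ * t * t = t := by rw [inv_mul_cancel, one_mul]
  rw [h5, etaC_refl_self cs hra ht, h0, add_zero]

lemma mem_lis_of_lt {t w : W} (ht : cs.IsReflection t) (h : ℓ (t * w) < ℓ w)
    {ω : List B} (hω : π ω = w) : t ∈ cs.leftInvSeq ω := by
  have h1 : etaC cs hra w t = 1 := eta_eq_one_of_lt cs hra ht h
  rw [← hω, etaC_wordProd] at h1
  have h2 : (cs.leftInvSeq ω).count t ≠ 0 := by
    intro hc; rw [hc] at h1; simp at h1
  rw [← List.count_pos_iff]; omega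

/-- strong exchange -/
lemma strong_exchange {t w : W} (ht : cs.IsReflection t) (h : ℓ (t * w) < ℓ w)
    {ω : List B} (hω : π ω = w) :
    ∃ j < ω.length, t * w = π (ω.eraseIdx j) := by
  have hmem := mem_lis_of_lt cs hra ht h hω
  obtain ⟨j, hj, hget⟩ := List.mem_iff_getElem.mp hmem
  rw [cs.length_leftInvSeq] at hj
  refine ⟨j, hj, ?_⟩
  rw [← hω, ← hget, ← List.getD_eq_getElem _ 1, cs.getD_leftInvSeq_mul_wordProd]


/-! ### descent and exchange consequences -/

omit hra in
lemma simple_ne_of_ne (hra : RA M) {i j : B} (hij : i ≠ j) : s i ≠ s j := by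
  classical
  have hsq : ∀ x : Multiplicative (ZMod 2), x * x = 1 := by decide
  set f : B → Multiplicative (ZMod 2) :=
    fun k => if k = i then (Multiplicative.ofAdd (1 : ZMod 2)) else 1 with hf
  have lf : M.IsLiftable f := by
    intro a b
    by_cases hab : a = b
    · subst hab; rw [M.diagonal, pow_one]; exact hsq _
    · rcases hra a b hab with h0 | h2
      · rw [h0, pow_zero]
      · rw [h2, pow_two]
        calc f a * f b * (f a * f b) = f a * (f b * f a) * f b := by group
          _ = f a * (f a * f b) * f b := by rw [mul_comm (f b) (f a)]
          _ = (f a * f a) * (f b * f b) := by group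
          _ = 1 := by rw [hsq, hsq, mul_one]
  intro heq
  have h1 := congrArg (cs.lift ⟨f, lf⟩) heq
  rw [cs.lift_apply_simple lf, cs.lift_apply_simple lf] at h1
  have h2 : f i = Multiplicative.ofAdd (1 : ZMod 2) := by simp [hf]
  have h3 : f j = 1 := by simp [hf, hij.symm]
  rw [h2, h3] at h1
  exact (by decide : (Multiplicative.ofAdd (1 : ZMod 2)) ≠ 1) h1

/-- any left descent yields a reduced word starting with that letter -/
lemma descent_cons {w : W} {i : B} (h : ℓ (s i * w) < ℓ w) :
    ∃ ω : List B, cs.IsReduced (i :: ω) ∧ w = π (i :: ω) ∧ π ω = s i * w := by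
  obtain ⟨ω₀, hred, hw⟩ := cs.exists_reduced_word' w
  obtain ⟨j, hj, hex⟩ := strong_exchange cs hra (cs.isReflection_simple i) h hw.symm
  refine ⟨ω₀.eraseIdx j, ?_, ?_, hex.symm⟩
  · unfold CoxeterSystem.IsReduced
    rw [cs.wordProd_cons, ← hex, cs.simple_mul_simple_cancel_left]
    have h5 := List.length_eraseIdx_add_one hj
    have hlen : ℓ w = ω₀.length := by rw [hw]; exact hred
    simp only [List.length_cons]
    omega
  · rw [cs.wordProd_cons, ← hex, cs.simple_mul_simple_cancel_left, hw]

/-- the key step: conjugating an inversion across a descent -/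
lemma stepS {x : W} {i : B} {t : W} (hi : ℓ (s i * x) < ℓ x) (ht : cs.IsReflection t)
    (htx : ℓ (t * x) < ℓ x) (hne : t ≠ s i) :
    cs.IsReflection (s i * t * s i) ∧ ℓ ((s i * t * s i) * (s i * x)) < ℓ (s i * x) := by
  obtain ⟨ω, hred, hx, hπ⟩ := descent_cons cs hra hi
  have hmem : t ∈ cs.leftInvSeq (i :: ω) := mem_lis_of_lt cs hra ht htx hx.symm
  have hlis : cs.leftInvSeq (i :: ω) = s i :: List.map (MulAut.conj (s i)) (cs.leftInvSeq ω) :=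
    rfl
  rw [hlis, List.mem_cons] at hmem
  rcases hmem with h1 | h2
  · exact absurd h1 hne
  · obtain ⟨t', ht', htt'⟩ := List.mem_map.mp h2
    have hkey : s i * t * s i = t' := by
      rw [← htt']
      show s i * (s i * t' * (s i)⁻¹) * s i = t'
      rw [cs.inv_simple, mul_conj_mul (cs.simple_mul_simple_self i)]
    have hredω : cs.IsReduced ω := by
      have := CoxeterSystem.IsReduced.drop hred 1
      simpa using this
    have hinv := cs.isLeftInversion_of_mem_leftInvSeq hredω ht'
    rw [hπ] at hinv
    have hrefl' : cs.IsReflection t' := cs.isReflection_of_mem_leftInvSeq ω ht'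
    rw [hkey]
    exact ⟨hrefl', hinv.2⟩



/-! ### alternating chains -/

omit hra

/-- alternating letter sequence -/
def altc (i j : B) (m : ℕ) : B := if m % 2 = 0 then i else j

def Yc (i j : B) (w : W) : ℕ → W
  | 0 => w
  | (m+1) => s (altc i j m) * Yc i j w m

def Tc (i j : B) : ℕ → W
  | 0 => s j
  | (m+1) => s (altc i j m) * Tc i j m * s (altc i j m)

lemma altc_flip (i j : B) (m : ℕ) : altc j i (m+1) = altc i j m := by
  unfold altc
  rcases Nat.mod_two_eq_zero_or_one m with h | h
  · have h2 : (m+1) % 2 = 1 := by omega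
    simp [h, h2]
  · have h2 : (m+1) % 2 = 0 := by omega
    simp [h, h2]

lemma TY (i j : B) (w : W) (m : ℕ) :
    Tc cs i j m * Yc cs i j w m = Yc cs j i w (m+1) := by
  induction m with
  | zero =>
    show s j * w = s (altc j i 0) * w
    rfl
  | succ m ih =>
    show (s (altc i j m) * Tc cs i j m * s (altc i j m)) * (s (altc i j m) * Yc cs i j w m) = _
    have h2 : Yc cs j i w (m+2) = s (altc j i (m+1)) * Yc cs j i w (m+1) := rfl
    rw [h2, altc_flip, ← ih]
    calc (s (altc i j m) * Tc cs i j m * s (altc i j m)) * (s (altc i j m) * Yc cs i j w m)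
        = s (altc i j m) * Tc cs i j m
            * (s (altc i j m) * (s (altc i j m) * Yc cs i j w m)) := by group
      _ = s (altc i j m) * Tc cs i j m * Yc cs i j w m := by
          rw [cs.simple_mul_simple_cancel_left]
      _ = s (altc i j m) * (Tc cs i j m * Yc cs i j w m) := by group

lemma Tc_refl (i j : B) (m : ℕ) : cs.IsReflection (Tc cs i j m) := by
  induction m with
  | zero => exact cs.isReflection_simple j
  | succ m ih =>
    have h := ih.conj (s (altc i j m))
    rw [cs.inv_simple] at h
    exact h

/-! ### the infinite dihedral retraction -/

lemma subLeft_sq (K : ℤ) : (Equiv.subLeft K : Equiv.Perm ℤ) * Equiv.subLeft K = 1 := by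
  ext x
  simp only [Equiv.Perm.mul_apply, Equiv.subLeft_apply, Equiv.Perm.one_apply]
  omega

lemma subLeft_conj (D C : ℤ) :
    (Equiv.subLeft D : Equiv.Perm ℤ) * Equiv.subLeft C * Equiv.subLeft D
      = Equiv.subLeft (2*D - C) := by
  ext x
  simp only [Equiv.Perm.mul_apply, Equiv.subLeft_apply]
  omega

noncomputable local instance : DecidableEq B := Classical.decEq B

noncomputable def ddg (i j : B) : B → Equiv.Perm ℤ :=
  fun k => if k = i then Equiv.subLeft 0 else if k = j then Equiv.subLeft 1 else 1

lemma ddg_sq (i j k : B) : ddg i j k * ddg i j k = 1 := by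
  unfold ddg
  split_ifs <;> first | exact subLeft_sq _ | exact one_mul 1

lemma ddg_one (i j : B) {k : B} (h1 : k ≠ i) (h2 : k ≠ j) : ddg i j k = 1 := by
  unfold ddg; rw [if_neg h1, if_neg h2]

include hra

lemma ddg_liftable {i j : B} (hij : i ≠ j) (hM : M.M i j = 0) :
    M.IsLiftable (ddg i j (B := B)) := by
  intro a b
  by_cases hab : a = b
  · subst hab; rw [M.diagonal, pow_one]; exact ddg_sq i j a
  · rcases hra a b hab with h0 | h2
    · rw [h0, pow_zero]
    · rw [h2, pow_two]
      by_cases hA : (a = i ∧ b = j) ∨ (a = j ∧ b = i)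
      · exfalso
        rcases hA with ⟨ha, hb⟩ | ⟨ha, hb⟩
        · rw [ha, hb, hM] at h2; omega
        · rw [ha, hb] at h2
          rw [M.symmetric j i, hM] at h2; omega
      · push_neg at hA
        have hone : ddg i j a = 1 ∨ ddg i j b = 1 := by
          by_cases hai : a = i
          · right
            exact ddg_one i j (fun h => hab (by rw [hai, h])) (hA.1 hai)
          · by_cases haj : a = j
            · right
              exact ddg_one i j (hA.2 haj) (fun h => hab (by rw [haj, h]))
            · left; exact ddg_one i j hai haj
        rcases hone with h | h
        · rw [h, one_mul]; exact ddg_sq i j b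
        · rw [h, mul_one]; exact ddg_sq i j a

omit hra

def ddD (n : ℕ) : ℤ := if n % 2 = 0 then 0 else 1

def ddK : ℕ → ℤ
  | 0 => 1
  | (n+1) => 2 * ddD n - ddK n

lemma ddK_closed (m : ℕ) : ddK m = if m % 2 = 0 then (m:ℤ)+1 else -(m:ℤ) := by
  induction m with
  | zero => simp [ddK]
  | succ m ih =>
    show 2 * ddD m - ddK m = _
    rw [ih]; unfold ddD
    rcases Nat.mod_two_eq_zero_or_one m with h | h
    · rw [if_pos h, if_pos h, if_neg (by omega)]
      push_cast; ring
    · rw [if_neg (by omega), if_neg (by omega), if_pos (by omega)]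
      push_cast; ring

include hra

lemma Tc_ne {i j : B} (hij : i ≠ j) (hM : M.M i j = 0) (m : ℕ) :
    Tc cs i j m ≠ s (altc i j m) := by
  have lf := ddg_liftable hra hij hM
  set ρ := cs.lift ⟨ddg i j, lf⟩ with hρ
  have hsimple : ∀ k, ρ (s k) = ddg i j k := fun k => cs.lift_apply_simple lf k
  have haltc : ∀ n, ρ (s (altc i j n)) = Equiv.subLeft (ddD n) := by
    intro n
    rw [hsimple]
    rcases Nat.mod_two_eq_zero_or_one n with h | h
    · simp [altc, ddg, ddD, h]
    · simp [altc, ddg, ddD, h, Ne.symm hij]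
  have hT : ∀ n, ρ (Tc cs i j n) = Equiv.subLeft (ddK n) := by
    intro n
    induction n with
    | zero =>
      show ρ (s j) = _
      rw [hsimple]
      show ddg i j j = Equiv.subLeft (1:ℤ)
      simp [ddg, Ne.symm hij]
    | succ n ih =>
      show ρ (s (altc i j n) * Tc cs i j n * s (altc i j n)) = _
      rw [map_mul, map_mul, ih, haltc, subLeft_conj]
      rfl
  intro heq
  have h1 := congrArg ρ heq
  rw [hT, haltc] at h1
  have h2 : ddK m = ddD m := by
    have h3 := DFunLike.congr_fun h1 (0:ℤ)
    simp only [Equiv.subLeft_apply, sub_zero] at h3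
    exact h3
  rw [ddK_closed] at h2; unfold ddD at h2
  rcases Nat.mod_two_eq_zero_or_one m with h | h
  · rw [if_pos h, if_pos h] at h2; omega
  · rw [if_neg (by omega), if_neg (by omega)] at h2; omega

lemma chain (m : ℕ) : ∀ (i j : B) (w : W), i ≠ j → M.M i j = 0 →
    ℓ (s i * w) < ℓ w → ℓ (s j * w) < ℓ w →
    ℓ (Yc cs i j w m) + m = ℓ w ∧ ℓ (Tc cs i j m * Yc cs i j w m) < ℓ (Yc cs i j w m) := by
  induction m with
  | zero =>
    intro i j w hij hM hi hj
    exact ⟨by simp [Yc], hj⟩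
  | succ m ih =>
    intro i j w hij hM hi hj
    obtain ⟨ha1, hb1⟩ := ih i j w hij hM hi hj
    obtain ⟨ha2, hb2⟩ := ih j i w hij.symm (by rw [M.symmetric j i]; exact hM) hj hi
    have hTY := TY cs j i w m
    rw [hTY] at hb2
    have hstep : Yc cs i j w (m+1) = s (altc i j m) * Yc cs i j w m := rfl
    have hpm := cs.length_simple_mul (Yc cs i j w m) (altc i j m)
    rw [← hstep] at hpm
    have ha' : ℓ (Yc cs i j w (m+1)) + (m+1) = ℓ w := by omega
    refine ⟨ha', ?_⟩
    have hclt : ℓ (s (altc i j m) * Yc cs i j w m) < ℓ (Yc cs i j w m) := by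
      rw [← hstep]; omega
    have hS := stepS cs hra hclt (Tc_refl cs i j m) hb1 (Tc_ne cs hra hij hM m)
    exact hS.2

lemma comm_of_descents {i j : B} {w : W} (hij : i ≠ j)
    (hi : ℓ (s i * w) < ℓ w) (hj : ℓ (s j * w) < ℓ w) :
    s i * s j = s j * s i := by
  by_cases hM : M.M i j = 0
  · exfalso
    have h := (chain cs hra (ℓ w + 1) i j w hij hM hi hj).1
    omega
  · rcases hra i j hij with h0 | h2
    · exact absurd h0 hM
    · exact simple_comm_of_two cs h2



/-! ### the key additivity lemma -/

lemma lemA (n : ℕ) : ∀ b c : W, ℓ b ≤ n →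
    (∀ k : B, ¬(cs.IsLeftDescent b k ∧ cs.IsLeftDescent c k)) →
    ℓ (b⁻¹ * c) = ℓ b + ℓ c := by
  induction n with
  | zero =>
    intro b c hb _
    have hb1 : b = 1 := cs.length_eq_zero_iff.mp (by omega)
    subst hb1; simp
  | succ n ih =>
    intro b c hb hdisj
    by_cases hb1 : b = 1
    · subst hb1; simp
    · obtain ⟨i, hi⟩ := cs.exists_leftDescent_of_ne_one hb1
      have hi' : ℓ (s i * b) + 1 = ℓ b := (cs.isLeftDescent_iff).mp hi
      have hic : ¬ cs.IsLeftDescent c i := fun h => hdisj i ⟨hi, h⟩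
      have hic' : ℓ (s i * c) = ℓ c + 1 := (cs.not_isLeftDescent_iff).mp hic
      have hsb : s i * (s i * b) = b := by rw [cs.simple_mul_simple_cancel_left]
      have hsc : s i * (s i * c) = c := by rw [cs.simple_mul_simple_cancel_left]
      have hdisj' : ∀ k : B, ¬(cs.IsLeftDescent (s i * b) k ∧ cs.IsLeftDescent (s i * c) k) := by
        rintro k ⟨hkb, hkc⟩
        have hkb' : ℓ (s k * (s i * b)) < ℓ (s i * b) := hkb
        have hkc' : ℓ (s k * (s i * c)) < ℓ (s i * c) := hkc
        have hki : k ≠ i := by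
          rintro rfl
          rw [hsb] at hkb'; omega
        have hidc' : ℓ (s i * (s i * c)) < ℓ (s i * c) := by rw [hsc]; omega
        have hcomm : s i * s k = s k * s i :=
          comm_of_descents cs hra (Ne.symm hki) hidc' hkc'
        have hkb2 : ℓ (s k * b) < ℓ b := by
          have heq : s k * b = s i * (s k * (s i * b)) := by
            calc s k * b = s k * (s i * (s i * b)) := by rw [hsb]
              _ = (s k * s i) * (s i * b) := by group
              _ = (s i * s k) * (s i * b) := by rw [hcomm]
              _ = s i * (s k * (s i * b)) := by group
          have h1 : ℓ (s i * (s k * (s i * b))) ≤ ℓ (s k * (s i * b)) + 1 := by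
            have h2 := cs.length_mul_le (s i) (s k * (s i * b))
            rw [cs.length_simple] at h2; omega
          rw [heq]; omega
        have hkc2 : ℓ (s k * c) < ℓ c := by
          obtain ⟨_, hS2⟩ := stepS cs hra hidc' (cs.isReflection_simple k) hkc'
            (simple_ne_of_ne cs hra hki)
          rw [hsc] at hS2
          have he : s i * s k * s i * c = s k * c := by
            calc s i * s k * s i * c = (s i * s k) * (s i * c) := by group
              _ = (s k * s i) * (s i * c) := by rw [hcomm]
              _ = s k * (s i * (s i * c)) := by group
              _ = s k * c := by rw [hsc]
          rw [he] at hS2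
          exact hS2
        exact hdisj k ⟨hkb2, hkc2⟩
      have hb'n : ℓ (s i * b) ≤ n := by omega
      have hres := ih (s i * b) (s i * c) hb'n hdisj'
      have hbc : (s i * b)⁻¹ * (s i * c) = b⁻¹ * c := by
        rw [mul_inv_rev, cs.inv_simple, mul_assoc, cs.simple_mul_simple_cancel_left]
      rw [hbc] at hres
      omega

/-! ### median construction -/

lemma median (n : ℕ) : ∀ b c : W, ℓ b + ℓ c ≤ n →
    ∃ m : W, ℓ m + ℓ (m⁻¹ * b) = ℓ b ∧ ℓ m + ℓ (m⁻¹ * c) = ℓ c ∧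
      ℓ (b⁻¹ * m) + ℓ (m⁻¹ * c) = ℓ (b⁻¹ * c) := by
  induction n with
  | zero =>
    intro b c h
    have hb : b = 1 := cs.length_eq_zero_iff.mp (by omega)
    have hc : c = 1 := cs.length_eq_zero_iff.mp (by omega)
    subst hb; subst hc
    exact ⟨1, by simp, by simp, by simp⟩
  | succ n ih =>
    intro b c hn
    by_cases hcom : ∃ k : B, cs.IsLeftDescent b k ∧ cs.IsLeftDescent c k
    · obtain ⟨k, hkb, hkc⟩ := hcom
      have hkb' : ℓ (s k * b) + 1 = ℓ b := cs.isLeftDescent_iff.mp hkb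
      have hkc' : ℓ (s k * c) + 1 = ℓ c := cs.isLeftDescent_iff.mp hkc
      have hle : ℓ (s k * b) + ℓ (s k * c) ≤ n := by omega
      obtain ⟨m, h1, h2, h3⟩ := ih (s k * b) (s k * c) hle
      have hlen : ℓ (s k * m) = ℓ m + 1 := by
        rcases cs.length_simple_mul m k with h | h
        · exact h
        · exfalso
          have hbb : b = (s k * m) * (m⁻¹ * (s k * b)) := by
            rw [show (s k * m) * (m⁻¹ * (s k * b)) = s k * (s k * b) from by group,
              cs.simple_mul_simple_cancel_left]
          have h4 := cs.length_mul_le (s k * m) (m⁻¹ * (s k * b))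
          rw [← hbb] at h4
          omega
      refine ⟨s k * m, ?_, ?_, ?_⟩
      · have he : (s k * m)⁻¹ * b = m⁻¹ * (s k * b) := by
          rw [mul_inv_rev, cs.inv_simple, mul_assoc]
        rw [hlen, he]; omega
      · have he : (s k * m)⁻¹ * c = m⁻¹ * (s k * c) := by
          rw [mul_inv_rev, cs.inv_simple, mul_assoc]
        rw [hlen, he]; omega
      · have he1 : b⁻¹ * (s k * m) = (s k * b)⁻¹ * m := by
          rw [mul_inv_rev, cs.inv_simple, mul_assoc]
        have he2 : (s k * m)⁻¹ * c = m⁻¹ * (s k * c) := by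
          rw [mul_inv_rev, cs.inv_simple, mul_assoc]
        have he3 : b⁻¹ * c = (s k * b)⁻¹ * (s k * c) := by
          rw [mul_inv_rev, cs.inv_simple, mul_assoc, cs.simple_mul_simple_cancel_left]
        rw [he1, he2, he3]; exact h3
    · have hdisj : ∀ k : B, ¬(cs.IsLeftDescent b k ∧ cs.IsLeftDescent c k) :=
        fun k hk => hcom ⟨k, hk⟩
      have hA := lemA cs hra (ℓ b) b c le_rfl hdisj
      refine ⟨1, by simp, by simp, ?_⟩
      rw [mul_one, inv_one, one_mul, hA, cs.length_inv]


end racg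

/-- In a right-angled Coxeter group with word metric
`d γ β = ℓ (γ⁻¹ * β)`, any three elements span a tripod: there is a `δ`
lying between each pair of them. -/
theorem racg_tripod
    {B : Type*} {W : Type*} [Group W] {M : CoxeterMatrix B}
    (cs : CoxeterSystem M W)
    (hra : ∀ s t : B, s ≠ t → M s t = 0 ∨ M s t = 2)
    (α β γ : W) :
    ∃ δ : W,
      cs.length (α⁻¹ * δ) + cs.length (δ⁻¹ * β) = cs.length (α⁻¹ * β) ∧
      cs.length (α⁻¹ * δ) + cs.length (δ⁻¹ * γ) = cs.length (α⁻¹ * γ) ∧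
      cs.length (β⁻¹ * δ) + cs.length (δ⁻¹ * γ) = cs.length (β⁻¹ * γ) := by
  have hra' : RA M := hra
  obtain ⟨m, h1, h2, h3⟩ := median cs hra'
    (cs.length (α⁻¹ * β) + cs.length (α⁻¹ * γ)) (α⁻¹ * β) (α⁻¹ * γ) le_rfl
  refine ⟨α * m, ?_, ?_, ?_⟩
  · have e1 : α⁻¹ * (α * m) = m := by group
    have e2 : (α * m)⁻¹ * β = m⁻¹ * (α⁻¹ * β) := by group
    rw [e1, e2]; exact h1
  · have e1 : α⁻¹ * (α * m) = m := by group
    have e2 : (α * m)⁻¹ * γ = m⁻¹ * (α⁻¹ * γ) := by group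
    rw [e1, e2]; exact h2
  · have e3 : β⁻¹ * (α * m) = (α⁻¹ * β)⁻¹ * m := by group
    have e4 : (α * m)⁻¹ * γ = m⁻¹ * (α⁻¹ * γ) := by group
    have e5 : β⁻¹ * γ = (α⁻¹ * β)⁻¹ * (α⁻¹ * γ) := by group
    rw [e3, e4, e5]; exact h3
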